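/- arXiv:1511.05905 — 2 statements merged into one kernel-verified Lean document; each statement's English description precedes it below -/
import Mathlib

section
/- Each Jucys–Murphy element l_r (r ∈ [1,n]) commutes with every element of the subalgebra A^{⊗n} of H_n(A). -/
/-!
Statement 6 (Lemma `JMcent`): each Jucys–Murphy element
`l_r = -∑_{t<r} Δ_{t,r}·(t,r)` of `H_n(A)` commutes with every element of the
subalgebra `A^{⊗n}` of `H_n(A)`.
-/

open scoped TensorProduct


noncomputable section

/-- The distinguished element `Δ(1)` of a graded symmetric algebra. -/
noncomputable def DeltaElem (k A : Type*) [CommRing k] [Ring A] [Algebra k A]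
    [Module.Free k A] [Module.Finite k A]
    (φ : A ≃ₗ[k] Module.Dual k A) : A ⊗[k] A :=
  TensorProduct.map φ.symm.toLinearMap φ.symm.toLinearMap
    ((TensorProduct.dualDistribEquiv k A A).symm
      ((LinearMap.mul' k A).dualMap (φ 1)))

variable (k A : Type*) [CommRing k] [Ring A] [Algebra k A] (n : ℕ)

/-- The `n`-fold tensor power `A^{⊗ n}`. -/
abbrev TPow := PiTensorProduct k (fun _ : Fin n => A)

/-- The place permutation action of `σ ∈ S_n` on `A^{⊗n}`:
`^σ(v_1 ⊗ ⋯ ⊗ v_n) = v_{σ⁻¹ 1} ⊗ ⋯ ⊗ v_{σ⁻¹ n}`. -/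
noncomputable def permAct (σ : Equiv.Perm (Fin n)) : TPow k A n ≃ₗ[k] TPow k A n :=
  PiTensorProduct.reindex k (fun _ : Fin n => A) σ

/-- The map `ι_{t,u} : A ⊗ A → A^{⊗n}` placing the two factors in slots `t` and `u`
(`t ≠ u`) and `1`'s elsewhere. -/
noncomputable def slotEmb (t u : Fin n) (h : t ≠ u) : A ⊗[k] A →ₗ[k] TPow k A n :=
  TensorProduct.lift <| LinearMap.mk₂ k
    (fun a b => PiTensorProduct.tprod k
        (Function.update (Function.update (fun _ : Fin n => (1 : A)) t a) u b))
    (by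
      intro a a' b
      try dsimp only
      rw [Function.update_comm h, Function.update_comm h, Function.update_comm h,
        MultilinearMap.map_update_add])
    (by
      intro c a b
      try dsimp only
      rw [Function.update_comm h, Function.update_comm h,
        MultilinearMap.map_update_smul])
    (by intro a b b'; (try dsimp only); rw [MultilinearMap.map_update_add])
    (by intro c a b; (try dsimp only); rw [MultilinearMap.map_update_smul])

/-- `Δ_{t,u} := ι_{t,u}(Δ(1)) ∈ A^{⊗n}`. -/
noncomputable def DeltaSlot (D : A ⊗[k] A) (t u : Fin n) (h : t ≠ u) : TPow k A n :=
  slotEmb k A n t u h D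

/-- Generators of the rank `n` affinization `H_n(A)`. -/
inductive AffGen : Type _
  | z : Fin n → AffGen
  | t : TPow k A n → AffGen
  | s : Equiv.Perm (Fin n) → AffGen

variable {k A}

open FreeAlgebra in
/-- The defining relations of the rank `n` affinization `H_n(A)` (relative to a
choice of distinguished element `D = Δ(1) ∈ A ⊗ A`): the relations of the free
product `k[z_1,…,z_n] ⋆ A^{⊗n} ⋆ kS_n` together with the commutation relations
(3.4)–(3.6) of Definition 3.3. -/
inductive AffRel (D : A ⊗[k] A) :
    FreeAlgebra k (AffGen k A n) → FreeAlgebra k (AffGen k A n) → Prop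
  -- `A^{⊗n}` is a subalgebra
  | t_add (a b : TPow k A n) :
      AffRel D (ι k (.t (a + b))) (ι k (.t a) + ι k (.t b))
  | t_smul (c : k) (a : TPow k A n) :
      AffRel D (ι k (.t (c • a))) (c • ι k (.t a))
  | t_mul (a b : TPow k A n) :
      AffRel D (ι k (.t (a * b))) (ι k (.t a) * ι k (.t b))
  | t_one : AffRel D (ι k (.t 1)) 1
  -- `k S_n` is a subalgebra
  | s_mul (σ τ : Equiv.Perm (Fin n)) :
      AffRel D (ι k (.s (σ * τ))) (ι k (.s σ) * ι k (.s τ))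
  | s_one : AffRel D (ι k (.s 1)) 1
  -- the polynomial generators commute
  | zz (i j : Fin n) :
      AffRel D (ι k (.z i) * ι k (.z j)) (ι k (.z j) * ι k (.z i))
  -- relation (3.4): `a z_j = z_j a`
  | az (a : TPow k A n) (j : Fin n) :
      AffRel D (ι k (.t a) * ι k (.z j)) (ι k (.z j) * ι k (.t a))
  -- relation (3.5): `s_i a = (^{s_i} a) s_i`
  | sa (i : Fin n) (h : (i : ℕ) + 1 < n) (a : TPow k A n) :
      AffRel D (ι k (.s (Equiv.swap i ⟨i + 1, h⟩)) * ι k (.t a))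
        (ι k (.t (permAct k A n (Equiv.swap i ⟨i + 1, h⟩) a)) *
          ι k (.s (Equiv.swap i ⟨i + 1, h⟩)))
  -- relation (3.6): `s_i z_j - z_{s_i j} s_i = (δ_{i,j} - δ_{i+1,j}) Δ_{i,i+1}`
  | sz (i : Fin n) (h : (i : ℕ) + 1 < n) (j : Fin n) :
      AffRel D (ι k (.s (Equiv.swap i ⟨i + 1, h⟩)) * ι k (.z j))
        (ι k (.z (Equiv.swap i ⟨i + 1, h⟩ j)) * ι k (.s (Equiv.swap i ⟨i + 1, h⟩)) +
          ((if j = i then (1 : k) else 0) - (if j = ⟨i + 1, h⟩ then (1 : k) else 0)) •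
            ι k (.t (DeltaSlot k A n D i ⟨i + 1, h⟩
              (ne_of_lt (Fin.lt_def.mpr (Nat.lt_succ_self _))))))

/-- The rank `n` affinization `H_n(A)` of the symmetric algebra `A`, presented by
generators and relations. -/
abbrev AffAlg (D : A ⊗[k] A) := RingQuot (AffRel (k := k) (A := A) n D)

variable (D : A ⊗[k] A)

/-- The generator `z_i ∈ H_n(A)`. -/
noncomputable def zE (i : Fin n) : AffAlg n D :=
  RingQuot.mkAlgHom k (AffRel n D) (FreeAlgebra.ι k (.z i))

/-- The canonical map `A^{⊗n} → H_n(A)`. -/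
noncomputable def tE : TPow k A n →ₗ[k] AffAlg n D where
  toFun a := RingQuot.mkAlgHom k (AffRel n D) (FreeAlgebra.ι k (.t a))
  map_add' a b := by
    have := RingQuot.mkAlgHom_rel k (AffRel.t_add (D := D) (n := n) a b)
    simpa using this
  map_smul' c a := by
    have := RingQuot.mkAlgHom_rel k (AffRel.t_smul (D := D) (n := n) c a)
    simpa using this

/-- The canonical image of `σ ∈ S_n` in `H_n(A)`. -/
noncomputable def sE (σ : Equiv.Perm (Fin n)) : AffAlg n D :=
  RingQuot.mkAlgHom k (AffRel n D) (FreeAlgebra.ι k (.s σ))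

/-- The canonical map `k S_n → H_n(A)`. -/
noncomputable def gE : MonoidAlgebra k (Equiv.Perm (Fin n)) →ₐ[k] AffAlg n D :=
  MonoidAlgebra.lift k (AffAlg n D) (Equiv.Perm (Fin n))
    { toFun := fun σ => sE n D σ
      map_one' := by
        have := RingQuot.mkAlgHom_rel k (AffRel.s_one (D := D) (n := n))
        simpa [sE] using this
      map_mul' := fun σ τ => by
        have := RingQuot.mkAlgHom_rel k (AffRel.s_mul (D := D) (n := n) σ τ)
        simpa [sE] using this }

/-- The canonical `k`-linear map `k[z_1, …, z_n] → H_n(A)` sending a monomial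
`z^m` to `z_1^{m_1} ⋯ z_n^{m_n}`. -/
noncomputable def zMon : MvPolynomial (Fin n) k →ₗ[k] AffAlg n D :=
  (MvPolynomial.basisMonomials (Fin n) k).constr k
    (fun m => ((List.finRange n).map (fun i => zE n D i ^ m i)).prod)

/-- The underlying `k`-module `V = k[z_1,…,z_n] ⊗ A^{⊗n} ⊗ kS_n`. -/
abbrev AffModV := MvPolynomial (Fin n) k ⊗[k]
  (TPow k A n ⊗[k] MonoidAlgebra k (Equiv.Perm (Fin n)))

/-- The multiplication map `V → H_n(A)`, `f ⊗ a ⊗ w ↦ f a w`. -/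
noncomputable def mulMap : AffModV (k := k) (A := A) n →ₗ[k] AffAlg n D :=
  TensorProduct.lift <| (LinearMap.mul k (AffAlg n D)).compl₁₂ (zMon n D)
    (TensorProduct.lift <| (LinearMap.mul k (AffAlg n D)).compl₁₂ (tE n D)
      (gE n D).toLinearMap)

end

variable {k A : Type*} [CommRing k] [Ring A] [Algebra k A]

/-- The Jucys–Murphy element `l_r := -∑_{t<r} Δ_{t,r} (t,r)` of `H_n(A)`. -/
noncomputable def jmEl (n : ℕ) (D : A ⊗[k] A) (r : Fin n) : AffAlg n D :=
  - ∑ t : Fin n, if h : t < r then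
      tE n D (DeltaSlot k A n D t r (ne_of_lt h)) * sE n D (Equiv.swap t r)
    else 0

section AuxProof

open TensorProduct LinearMap

variable {k A : Type*} [CommRing k] [Ring A] [Algebra k A]

section DualStuff
variable [Module.Free k A] [Module.Finite k A] (φ : A ≃ₗ[k] Module.Dual k A)

/-- The pairing `A ⊗ A ≃ Dual (A ⊗ A)` induced by `φ`. -/
noncomputable def PhiAux : A ⊗[k] A ≃ₗ[k] Module.Dual k (A ⊗[k] A) :=
  (TensorProduct.congr φ φ).trans (TensorProduct.dualDistribEquiv k A A)

lemma PhiAux_tmul (b1 b2 x y : A) :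
    PhiAux φ (b1 ⊗ₜ[k] b2) (x ⊗ₜ[k] y) = φ b1 x * φ b2 y := by
  simp [PhiAux, TensorProduct.dualDistribEquiv]

lemma congr_map_symm (u : Module.Dual k A ⊗[k] Module.Dual k A) :
    TensorProduct.congr φ φ
      (TensorProduct.map φ.symm.toLinearMap φ.symm.toLinearMap u) = u := by
  induction u using TensorProduct.induction_on with
  | zero => rw [map_zero]; exact (TensorProduct.congr φ φ).map_zero
  | tmul f g => simp
  | add x y hx hy =>
    rw [map_add, (TensorProduct.congr φ φ).map_add, hx, hy]

lemma PhiAux_Delta (x y : A) :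
    PhiAux φ (DeltaElem k A φ) (x ⊗ₜ[k] y) = φ 1 (x * y) := by
  have h : PhiAux φ (DeltaElem k A φ) = (LinearMap.mul' k A).dualMap (φ 1) := by
    rw [DeltaElem, PhiAux, LinearEquiv.trans_apply, congr_map_symm,
      LinearEquiv.apply_symm_apply]
  rw [h, LinearMap.dualMap_apply, LinearMap.mul'_apply]

variable (hbimod : ∀ a x b y : A, φ (a * x * b) y = φ x (b * y * a))
include hbimod

lemma PhiAux_mapLL (x y : A) (u : A ⊗[k] A) (p q : A) :
    PhiAux φ (TensorProduct.map (mulLeft k x) (mulLeft k y) u) (p ⊗ₜ[k] q)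
      = PhiAux φ u ((p * x) ⊗ₜ[k] (q * y)) := by
  induction u using TensorProduct.induction_on with
  | zero => simp
  | tmul b1 b2 =>
    rw [TensorProduct.map_tmul, mulLeft_apply, mulLeft_apply, PhiAux_tmul, PhiAux_tmul]
    have h1 : φ (x * b1) p = φ b1 (p * x) := by simpa using hbimod x b1 1 p
    have h2 : φ (y * b2) q = φ b2 (q * y) := by simpa using hbimod y b2 1 q
    rw [h1, h2]
  | add u v hu hv => simp only [map_add, LinearMap.add_apply, hu, hv]

lemma PhiAux_mapRR (x y : A) (u : A ⊗[k] A) (p q : A) :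
    PhiAux φ (TensorProduct.map (mulRight k y) (mulRight k x) u) (p ⊗ₜ[k] q)
      = PhiAux φ u ((y * p) ⊗ₜ[k] (x * q)) := by
  induction u using TensorProduct.induction_on with
  | zero => simp
  | tmul b1 b2 =>
    rw [TensorProduct.map_tmul, mulRight_apply, mulRight_apply, PhiAux_tmul, PhiAux_tmul]
    have h1 : φ (b1 * y) p = φ b1 (y * p) := by simpa using hbimod 1 b1 y p
    have h2 : φ (b2 * x) q = φ b2 (x * q) := by simpa using hbimod 1 b2 x q
    rw [h1, h2]
  | add u v hu hv => simp only [map_add, LinearMap.add_apply, hu, hv]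

lemma trace_comm (a w : A) : φ 1 (a * w) = φ 1 (w * a) := by
  have h1 : φ a w = φ 1 (w * a) := by simpa using hbimod a 1 1 w
  have h2 : φ a w = φ 1 (a * w) := by simpa using hbimod 1 1 a w
  rw [← h2, h1]

lemma keyD (x y : A) :
    TensorProduct.map (mulLeft k x) (mulLeft k y) (DeltaElem k A φ)
      = TensorProduct.map (mulRight k y) (mulRight k x) (DeltaElem k A φ) := by
  apply (PhiAux φ).injective
  apply TensorProduct.ext'
  intro p q
  rw [PhiAux_mapLL φ hbimod, PhiAux_mapRR φ hbimod, PhiAux_Delta, PhiAux_Delta]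
  have h := trace_comm φ hbimod y (p * x * q)
  simp only [← mul_assoc] at h ⊢
  exact h.symm

end DualStuff

section SlotStuff

variable (n : ℕ)

/-- `slotEmb` with general background `v` instead of all ones. -/
noncomputable def slotFill (v : Fin n → A) (t u : Fin n) (h : t ≠ u) :
    A ⊗[k] A →ₗ[k] TPow k A n :=
  TensorProduct.lift <| LinearMap.mk₂ k
    (fun a b => PiTensorProduct.tprod k
        (Function.update (Function.update v t a) u b))
    (by
      intro a a' b
      try dsimp only
      rw [Function.update_comm h, Function.update_comm h, Function.update_comm h,
        MultilinearMap.map_update_add])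
    (by
      intro c a b
      try dsimp only
      rw [Function.update_comm h, Function.update_comm h,
        MultilinearMap.map_update_smul])
    (by intro a b b'; (try dsimp only); rw [MultilinearMap.map_update_add])
    (by intro c a b; (try dsimp only); rw [MultilinearMap.map_update_smul])

lemma slotFill_tmul (v : Fin n → A) (t u : Fin n) (h : t ≠ u) (a b : A) :
    slotFill n v t u h (a ⊗ₜ[k] b)
      = PiTensorProduct.tprod k (Function.update (Function.update v t a) u b) := rfl

lemma slotEmb_tmul (t u : Fin n) (h : t ≠ u) (a b : A) :
    slotEmb k A n t u h (a ⊗ₜ[k] b)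
      = PiTensorProduct.tprod k
          (Function.update (Function.update (fun _ : Fin n => (1 : A)) t a) u b) := rfl

lemma prod_left (v : Fin n → A) (t r : Fin n) (h : t ≠ r) (u : A ⊗[k] A) :
    PiTensorProduct.tprod k v * slotEmb k A n t r h u
      = slotFill n v t r h
          (TensorProduct.map (mulLeft k (v t)) (mulLeft k (v r)) u) := by
  induction u using TensorProduct.induction_on with
  | zero => simp
  | tmul b1 b2 =>
    rw [TensorProduct.map_tmul, mulLeft_apply, mulLeft_apply, slotEmb_tmul,
      slotFill_tmul, PiTensorProduct.tprod_mul_tprod]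
    have hfun : (v * Function.update (Function.update (fun _ : Fin n => (1 : A)) t b1) r b2)
        = Function.update (Function.update v t (v t * b1)) r (v r * b2) := by
      funext i
      simp only [Pi.mul_apply, Function.update_apply]
      split_ifs with h1 h2 <;> simp_all
    rw [hfun]
  | add u w hu hw => simp only [map_add, mul_add, hu, hw]

lemma prod_right (v : Fin n → A) (t r : Fin n) (h : t ≠ r) (u : A ⊗[k] A) :
    slotEmb k A n t r h u * PiTensorProduct.tprod k (v ∘ Equiv.swap t r)
      = slotFill n v t r h
          (TensorProduct.map (mulRight k (v r)) (mulRight k (v t)) u) := by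
  induction u using TensorProduct.induction_on with
  | zero => simp
  | tmul b1 b2 =>
    rw [TensorProduct.map_tmul, mulRight_apply, mulRight_apply, slotEmb_tmul,
      slotFill_tmul, PiTensorProduct.tprod_mul_tprod]
    have hfun : (Function.update (Function.update (fun _ : Fin n => (1 : A)) t b1) r b2
          * (v ∘ Equiv.swap t r))
        = Function.update (Function.update v t (b1 * v r)) r (b2 * v t) := by
      funext i
      simp only [Pi.mul_apply, Function.comp_apply, Function.update_apply]
      split_ifs with h1 h2
      · subst h1; rw [Equiv.swap_apply_right]
      · subst h2; rw [Equiv.swap_apply_left]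
      · rw [Equiv.swap_apply_of_ne_of_ne h2 h1, one_mul]
    rw [hfun]
  | add u w hu hw => simp only [map_add, add_mul, hu, hw]

variable [Module.Free k A] [Module.Finite k A] (φ : A ≃ₗ[k] Module.Dual k A)

lemma DeltaSlot_comm (hbimod : ∀ a x b y : A, φ (a * x * b) y = φ x (b * y * a))
    (t r : Fin n) (h : t ≠ r) (a : TPow k A n) :
    DeltaSlot k A n (DeltaElem k A φ) t r h * permAct k A n (Equiv.swap t r) a
      = a * DeltaSlot k A n (DeltaElem k A φ) t r h := by
  induction a using PiTensorProduct.induction_on with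
  | smul_tprod c v =>
    have hperm : permAct k A n (Equiv.swap t r) (PiTensorProduct.tprod k v)
        = PiTensorProduct.tprod k (v ∘ Equiv.swap t r) := by
      rw [permAct, PiTensorProduct.reindex_tprod, Equiv.symm_swap]
      rfl
    rw [map_smul, hperm, mul_smul_comm, smul_mul_assoc]
    congr 1
    show slotEmb k A n t r h (DeltaElem k A φ) * _ = _ * slotEmb k A n t r h (DeltaElem k A φ)
    rw [prod_right n v t r h, prod_left n v t r h, keyD φ hbimod (v t) (v r)]
  | add x y hx hy => simp only [map_add, mul_add, add_mul, hx, hy]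

end SlotStuff

section AffStuff

variable (n : ℕ) (D : A ⊗[k] A)

lemma tE_apply (a : TPow k A n) :
    tE n D a = RingQuot.mkAlgHom k (AffRel n D) (FreeAlgebra.ι k (.t a)) := rfl

lemma tE_mul (a b : TPow k A n) : tE n D (a * b) = tE n D a * tE n D b := by
  have h := RingQuot.mkAlgHom_rel k (AffRel.t_mul (D := D) (n := n) a b)
  simpa [tE_apply, map_mul] using h

lemma sE_mul (σ τ : Equiv.Perm (Fin n)) : sE n D (σ * τ) = sE n D σ * sE n D τ := by
  have h := RingQuot.mkAlgHom_rel k (AffRel.s_mul (D := D) (n := n) σ τ)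
  simpa [sE, map_mul] using h

lemma sE_one : sE n D 1 = 1 := by
  have h := RingQuot.mkAlgHom_rel k (AffRel.s_one (D := D) (n := n))
  simpa [sE] using h

lemma permAct_one (a : TPow k A n) : permAct k A n 1 a = a := by
  rw [permAct, Equiv.Perm.one_def, PiTensorProduct.reindex_refl, LinearEquiv.refl_apply]

lemma permAct_mul (σ τ : Equiv.Perm (Fin n)) (a : TPow k A n) :
    permAct k A n (σ * τ) a = permAct k A n σ (permAct k A n τ a) := by
  rw [permAct, permAct, permAct, Equiv.Perm.mul_def]
  exact (PiTensorProduct.reindex_reindex τ σ a).symm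

lemma sE_tE : ∀ (σ : Equiv.Perm (Fin n)) (a : TPow k A n),
    sE n D σ * tE n D a = tE n D (permAct k A n σ a) * sE n D σ := by
  cases n with
  | zero =>
    intro σ a
    have hσ : σ = 1 := Equiv.ext fun x => x.elim0
    subst hσ
    rw [permAct_one, sE_one, one_mul, mul_one]
  | succ m =>
    intro σ a
    have hσ : σ ∈ Submonoid.closure
        (Set.range fun i : Fin m => Equiv.swap i.castSucc i.succ) := by
      rw [Equiv.Perm.mclosure_swap_castSucc_succ]
      exact Submonoid.mem_top σ
    refine Submonoid.closure_induction
      (motive := fun τ _ => ∀ b : TPow k A (m + 1),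
        sE (m + 1) D τ * tE (m + 1) D b
          = tE (m + 1) D (permAct k A (m + 1) τ b) * sE (m + 1) D τ)
      ?_ ?_ ?_ hσ a
    · rintro τ ⟨i, rfl⟩ b
      have hlt : ((i.castSucc : Fin (m + 1)) : ℕ) + 1 < m + 1 := by
        simpa using Nat.succ_lt_succ i.isLt
      have hsucc : (⟨((i.castSucc : Fin (m + 1)) : ℕ) + 1, hlt⟩ : Fin (m + 1)) = i.succ := by
        ext; simp
      have h := RingQuot.mkAlgHom_rel k (AffRel.sa (D := D) i.castSucc hlt b)
      rw [hsucc] at h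
      simpa [sE, tE_apply, map_mul] using h
    · intro b
      rw [permAct_one, sE_one, one_mul, mul_one]
    · intro x y _ _ px py b
      rw [sE_mul, mul_assoc, py b, ← mul_assoc, px (permAct k A (m + 1) y b),
        mul_assoc, ← sE_mul, permAct_mul]

end AffStuff

end AuxProof

theorem stmt6
    (k A : Type*) [CommRing k] [IsNoetherianRing k] [Ring A] [Algebra k A]
    [Module.Free k A] [Module.Finite k A]
    (𝒜 : ℤ → Submodule k A) [GradedAlgebra 𝒜]
    (d : ℤ)
    (φ : A ≃ₗ[k] Module.Dual k A)
    (hbimod : ∀ a x b y : A, φ (a * x * b) y = φ x (b * y * a))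
    (hdeg : ∀ t s : ℤ, ∀ x ∈ 𝒜 t, ∀ y ∈ 𝒜 s, s ≠ d - t → φ x y = 0)
    (n : ℕ) :
    ∀ (r : Fin n) (a : TPow k A n),
      jmEl n (DeltaElem k A φ) r * tE n (DeltaElem k A φ) a
        = tE n (DeltaElem k A φ) a * jmEl n (DeltaElem k A φ) r := by
  intro r a
  rw [jmEl]
  have hneg : ∀ x y : AffAlg n (DeltaElem k A φ), -x * y = -(x * y) :=
    fun x y => neg_mul x y
  have hnegr : ∀ x y : AffAlg n (DeltaElem k A φ), x * -y = -(x * y) :=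
    fun x y => mul_neg x y
  have hinj : ∀ x y : AffAlg n (DeltaElem k A φ), -x = -y ↔ x = y :=
    fun x y => neg_inj
  have hsm : ∀ (f : Fin n → AffAlg n (DeltaElem k A φ)) (x),
      (∑ t : Fin n, f t) * x = ∑ t : Fin n, f t * x := fun f x => Finset.sum_mul _ _ _
  have hms : ∀ (f : Fin n → AffAlg n (DeltaElem k A φ)) (x),
      x * ∑ t : Fin n, f t = ∑ t : Fin n, x * f t := fun f x => Finset.mul_sum _ _ _
  have hassoc : ∀ x y z : AffAlg n (DeltaElem k A φ), x * y * z = x * (y * z) :=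
    fun x y z => mul_assoc x y z
  have hz1 : ∀ x : AffAlg n (DeltaElem k A φ), 0 * x = 0 := fun x => zero_mul x
  have hz2 : ∀ x : AffAlg n (DeltaElem k A φ), x * 0 = 0 := fun x => mul_zero x
  rw [hneg, hnegr, hinj, hsm, hms]
  refine Finset.sum_congr rfl fun t _ => ?_
  by_cases ht : t < r
  · rw [dif_pos ht, hassoc, sE_tE, ← hassoc, ← tE_mul,
      DeltaSlot_comm n φ hbimod t r (ne_of_lt ht), tE_mul, hassoc]
  · rw [dif_neg ht, hz1, hz2]
end

section
/- There is an isomorphism of graded k-algebras ν̂: Z_n^{aff}(Γ) → Z_n^{aff}(Γ)^{op} given on the generators by ν̂(z_t) = z_t, ν̂(e_i) = e_i (for each tuple i ∈ Γ_0^n of vertices), ν̂(a^{i,j}_t) = a^{j,i}_t, and ν̂(s_u) = s_u, for all t ∈ [1,n], u ∈ [1,n−1], and edges {i,j} ∈ Γ_1. -/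
/-!
Statement 14 (Lemma `affzigop`): there is an isomorphism of (graded) `k`-algebras
`ν̂ : Z_n^{aff}(Γ) → Z_n^{aff}(Γ)^{op}` with `ν̂(z_t) = z_t`, `ν̂(e_𝐢) = e_𝐢`,
`ν̂(a^{i,j}_t) = a^{j,i}_t` and `ν̂(s_u) = s_u`.
-/

noncomputable section

variable (k : Type*) [CommRing k]
variable (V : Type*) [Fintype V] [DecidableEq V] (G : SimpleGraph V) [DecidableRel G.Adj]

/-- Generators of the zigzag algebra `Z(Γ)` of a graph `Γ`: the idempotents `e_i`
(`i` a vertex), the arrows `a^{i,j} : j → i` (`{i,j}` an edge, one arrow for each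
orientation), and the length-two cycles `c_i` based at `i`. -/
inductive ZigGen : Type _
  | e : V → ZigGen
  | a : (p : V × V) → G.Adj p.1 p.2 → ZigGen
  | c : V → ZigGen

open FreeAlgebra in
/-- The defining relations of the zigzag algebra: the `e_i` are orthogonal
idempotents summing to `1`; `a^{i,j}` is a path from `j` to `i`; all paths of
length `≥ 3` vanish; length-two paths which are not cycles vanish; all length-two
cycles at a vertex `i` are equal (to `c_i`). -/
inductive ZigRel : FreeAlgebra k (ZigGen V G) → FreeAlgebra k (ZigGen V G) → Prop
  | ee (i j : V) :
      ZigRel (ι k (.e i) * ι k (.e j)) (if i = j then ι k (.e i) else 0)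
  | esum : ZigRel (∑ i : V, ι k (.e i)) 1
  | ea (i : V) (p : V × V) (h : G.Adj p.1 p.2) :
      ZigRel (ι k (.e i) * ι k (.a p h)) (if i = p.1 then ι k (.a p h) else 0)
  | ae (p : V × V) (h : G.Adj p.1 p.2) (j : V) :
      ZigRel (ι k (.a p h) * ι k (.e j)) (if j = p.2 then ι k (.a p h) else 0)
  | aa (p : V × V) (h : G.Adj p.1 p.2) (q : V × V) (h' : G.Adj q.1 q.2) :
      ZigRel (ι k (.a p h) * ι k (.a q h'))
        (if p.2 = q.1 ∧ p.1 = q.2 then ι k (.c p.1) else 0)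
  | ec (i j : V) :
      ZigRel (ι k (.e i) * ι k (.c j)) (if i = j then ι k (.c j) else 0)
  | ce (j i : V) :
      ZigRel (ι k (.c j) * ι k (.e i)) (if i = j then ι k (.c j) else 0)
  | ca (j : V) (p : V × V) (h : G.Adj p.1 p.2) :
      ZigRel (ι k (.c j) * ι k (.a p h)) 0
  | ac (p : V × V) (h : G.Adj p.1 p.2) (j : V) :
      ZigRel (ι k (.a p h) * ι k (.c j)) 0
  | cc (i j : V) : ZigRel (ι k (.c i) * ι k (.c j)) 0

/-- The zigzag algebra `Z(Γ)` of the graph `Γ`, presented by generators and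
relations. -/
abbrev ZigAlg := RingQuot (ZigRel k V G)

/-- The idempotent `e_i ∈ Z(Γ)`. -/
noncomputable def eZ (i : V) : ZigAlg k V G :=
  RingQuot.mkAlgHom k (ZigRel k V G) (FreeAlgebra.ι k (.e i))

/-- The arrow `a^{i,j} ∈ Z(Γ)` (a path from `j` to `i`), for an edge `{i,j}`. -/
noncomputable def aZ (p : V × V) (h : G.Adj p.1 p.2) : ZigAlg k V G :=
  RingQuot.mkAlgHom k (ZigRel k V G) (FreeAlgebra.ι k (.a p h))

/-- The length-two cycle `c e_i = c_i ∈ Z(Γ)`. -/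
noncomputable def cZ (i : V) : ZigAlg k V G :=
  RingQuot.mkAlgHom k (ZigRel k V G) (FreeAlgebra.ι k (.c i))

/-- Path-length degree of the generators of the zigzag algebra. -/
def zigDeg : ZigGen V G → ℕ
  | .e _ => 0
  | .a _ _ => 1
  | .c _ => 2

/-- The degree-`m` homogeneous component of the zigzag algebra for the path-length
grading: the span of the images of products of generators of total degree `m`. -/
noncomputable def ZigComp (m : ℕ) : Submodule k (ZigAlg k V G) :=
  Submodule.span k {x | ∃ L : List (ZigGen V G),
    (L.map (zigDeg V G)).sum = m ∧
    x = (L.map (fun g => RingQuot.mkAlgHom k (ZigRel k V G) (FreeAlgebra.ι k g))).prod}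

/-- The family `{e_i} ∪ {a^{i,j}} ∪ {c e_i}`, which is the standard basis of the
zigzag algebra. -/
noncomputable def zigFam :
    (V ⊕ {p : V × V // G.Adj p.1 p.2} ⊕ V) → ZigAlg k V G :=
  Sum.elim (fun i => eZ k V G i)
    (Sum.elim (fun p => aZ k V G p.1 p.2) (fun i => cZ k V G i))

end

open scoped TensorProduct


variable (k : Type*) [CommRing k]
  (V : Type*) [Fintype V] [DecidableEq V]
  (G : SimpleGraph V) [DecidableRel G.Adj]

/-- The distinguished element
`Δ(1) = ∑_i (e_i ⊗ c e_i + c e_i ⊗ e_i + ∑_{j ∼ i} a^{j,i} ⊗ a^{i,j})`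
of the zigzag algebra `Z(Γ)`. -/
noncomputable def zigDelta : ZigAlg k V G ⊗[k] ZigAlg k V G :=
  (∑ i : V, (eZ k V G i ⊗ₜ[k] cZ k V G i + cZ k V G i ⊗ₜ[k] eZ k V G i)) +
    ∑ p : {p : V × V // G.Adj p.1 p.2},
      aZ k V G (p.1.2, p.1.1) p.2.symm ⊗ₜ[k] aZ k V G p.1 p.2

/-- The rank `n` affine zigzag algebra `Z_n^{aff}(Γ) = H_n(Z(Γ))`. -/
abbrev AffZig (n : ℕ) := AffAlg (k := k) (A := ZigAlg k V G) n (zigDelta k V G)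

/-- The idempotent `e_𝐢 = e_{i_1} ⊗ ⋯ ⊗ e_{i_n} ∈ Z(Γ)^{⊗n}` for `𝐢 ∈ Γ₀^n`. -/
noncomputable def eTup (n : ℕ) (v : Fin n → V) : TPow k (ZigAlg k V G) n :=
  PiTensorProduct.tprod k (fun r => eZ k V G (v r))

/-- The element `a^{i,j}_t ∈ Z(Γ)^{⊗n}` with `a^{i,j}` in the `t`-th slot and `1`'s
elsewhere. -/
noncomputable def aSlot (n : ℕ) (t : Fin n) (p : V × V) (h : G.Adj p.1 p.2) :
    TPow k (ZigAlg k V G) n :=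
  PiTensorProduct.tprod k
    (Function.update (fun _ : Fin n => (1 : ZigAlg k V G)) t (aZ k V G p h))


set_option linter.unusedSectionVars false

namespace Aux14

open MulOpposite

section ZigFlip

variable (k : Type*) [CommRing k]
  (V : Type*) [Fintype V] [DecidableEq V]
  (G : SimpleGraph V) [DecidableRel G.Adj]

/-- The anti-automorphism generator map on the free algebra. -/
noncomputable def zigFlipFree : FreeAlgebra k (ZigGen V G) →ₐ[k] (ZigAlg k V G)ᵐᵒᵖ :=
  FreeAlgebra.lift k fun g => match g with
    | .e i => op (eZ k V G i)
    | .a p h => op (aZ k V G (p.2, p.1) h.symm)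
    | .c i => op (cZ k V G i)

@[simp] lemma zigFlipFree_e (i : V) :
    zigFlipFree k V G (FreeAlgebra.ι k (.e i)) = op (eZ k V G i) := by
  simp [zigFlipFree]

@[simp] lemma zigFlipFree_a (p : V × V) (h : G.Adj p.1 p.2) :
    zigFlipFree k V G (FreeAlgebra.ι k (.a p h)) = op (aZ k V G (p.2, p.1) h.symm) := by
  simp [zigFlipFree]

@[simp] lemma zigFlipFree_c (i : V) :
    zigFlipFree k V G (FreeAlgebra.ι k (.c i)) = op (cZ k V G i) := by
  simp [zigFlipFree]

lemma mk_e (i : V) :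
    RingQuot.mkAlgHom k (ZigRel k V G) (FreeAlgebra.ι k (.e i)) = eZ k V G i := rfl
lemma mk_a (p : V × V) (h : G.Adj p.1 p.2) :
    RingQuot.mkAlgHom k (ZigRel k V G) (FreeAlgebra.ι k (.a p h)) = aZ k V G p h := rfl
lemma mk_c (i : V) :
    RingQuot.mkAlgHom k (ZigRel k V G) (FreeAlgebra.ι k (.c i)) = cZ k V G i := rfl

lemma eZ_mul_eZ (i j : V) :
    eZ k V G i * eZ k V G j = if i = j then eZ k V G i else 0 := by
  have := RingQuot.mkAlgHom_rel k (ZigRel.ee (k := k) (V := V) (G := G) i j)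
  simpa [map_mul, apply_ite (RingQuot.mkAlgHom k (ZigRel k V G)), mk_e] using this

lemma eZ_mul_aZ (i : V) (p : V × V) (h : G.Adj p.1 p.2) :
    eZ k V G i * aZ k V G p h = if i = p.1 then aZ k V G p h else 0 := by
  have := RingQuot.mkAlgHom_rel k (ZigRel.ea (k := k) (V := V) (G := G) i p h)
  simpa [map_mul, apply_ite (RingQuot.mkAlgHom k (ZigRel k V G)), mk_e, mk_a] using this

lemma aZ_mul_eZ (p : V × V) (h : G.Adj p.1 p.2) (j : V) :
    aZ k V G p h * eZ k V G j = if j = p.2 then aZ k V G p h else 0 := by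
  have := RingQuot.mkAlgHom_rel k (ZigRel.ae (k := k) (V := V) (G := G) p h j)
  simpa [map_mul, apply_ite (RingQuot.mkAlgHom k (ZigRel k V G)), mk_e, mk_a] using this

lemma aZ_mul_aZ (p : V × V) (h : G.Adj p.1 p.2) (q : V × V) (h' : G.Adj q.1 q.2) :
    aZ k V G p h * aZ k V G q h' =
      if p.2 = q.1 ∧ p.1 = q.2 then cZ k V G p.1 else 0 := by
  have := RingQuot.mkAlgHom_rel k (ZigRel.aa (k := k) (V := V) (G := G) p h q h')
  simpa [map_mul, apply_ite (RingQuot.mkAlgHom k (ZigRel k V G)), mk_a, mk_c] using this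

lemma eZ_mul_cZ (i j : V) :
    eZ k V G i * cZ k V G j = if i = j then cZ k V G j else 0 := by
  have := RingQuot.mkAlgHom_rel k (ZigRel.ec (k := k) (V := V) (G := G) i j)
  simpa [map_mul, apply_ite (RingQuot.mkAlgHom k (ZigRel k V G)), mk_e, mk_c] using this

lemma cZ_mul_eZ (j i : V) :
    cZ k V G j * eZ k V G i = if i = j then cZ k V G j else 0 := by
  have := RingQuot.mkAlgHom_rel k (ZigRel.ce (k := k) (V := V) (G := G) j i)
  simpa [map_mul, apply_ite (RingQuot.mkAlgHom k (ZigRel k V G)), mk_e, mk_c] using this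

lemma cZ_mul_aZ (j : V) (p : V × V) (h : G.Adj p.1 p.2) :
    cZ k V G j * aZ k V G p h = 0 := by
  have := RingQuot.mkAlgHom_rel k (ZigRel.ca (k := k) (V := V) (G := G) j p h)
  simpa [map_mul, mk_a, mk_c] using this

lemma aZ_mul_cZ (p : V × V) (h : G.Adj p.1 p.2) (j : V) :
    aZ k V G p h * cZ k V G j = 0 := by
  have := RingQuot.mkAlgHom_rel k (ZigRel.ac (k := k) (V := V) (G := G) p h j)
  simpa [map_mul, mk_a, mk_c] using this

lemma cZ_mul_cZ (i j : V) :
    cZ k V G i * cZ k V G j = 0 := by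
  have := RingQuot.mkAlgHom_rel k (ZigRel.cc (k := k) (V := V) (G := G) i j)
  simpa [map_mul, mk_c] using this

lemma eZ_sum : (∑ i : V, eZ k V G i) = 1 := by
  have := RingQuot.mkAlgHom_rel k (ZigRel.esum (k := k) (V := V) (G := G))
  simpa [map_sum, mk_e] using this

lemma zigFlipFree_rel : ∀ ⦃x y : FreeAlgebra k (ZigGen V G)⦄,
    ZigRel k V G x y → zigFlipFree k V G x = zigFlipFree k V G y := by
  intro x y r
  induction r with
  | ee i j =>
      simp only [map_mul, zigFlipFree_e, apply_ite (zigFlipFree k V G), map_zero]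
      rw [← op_mul, eZ_mul_eZ]
      rcases eq_or_ne i j with rfl | hne
      · simp
      · simp [hne, Ne.symm hne]
  | esum =>
      simp only [map_sum, zigFlipFree_e, map_one]
      rw [← Finset.op_sum, eZ_sum, op_one]
  | ea i p h =>
      simp only [map_mul, zigFlipFree_e, zigFlipFree_a, apply_ite (zigFlipFree k V G), map_zero]
      rw [← op_mul, aZ_mul_eZ]
      split_ifs <;> simp
  | ae p h j =>
      simp only [map_mul, zigFlipFree_e, zigFlipFree_a, apply_ite (zigFlipFree k V G), map_zero]
      rw [← op_mul, eZ_mul_aZ]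
      split_ifs <;> simp
  | aa p h q h' =>
      simp only [map_mul, zigFlipFree_a, zigFlipFree_c, apply_ite (zigFlipFree k V G), map_zero]
      rw [← op_mul, aZ_mul_aZ]
      by_cases h1 : p.2 = q.1 <;> by_cases h2 : p.1 = q.2 <;>
        simp_all [eq_comm (a := q.2), eq_comm (a := q.1)]
  | ec i j =>
      simp only [map_mul, zigFlipFree_e, zigFlipFree_c, apply_ite (zigFlipFree k V G), map_zero]
      rw [← op_mul, cZ_mul_eZ]
      split_ifs <;> simp
  | ce j i =>
      simp only [map_mul, zigFlipFree_e, zigFlipFree_c, apply_ite (zigFlipFree k V G), map_zero]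
      rw [← op_mul, eZ_mul_cZ]
      split_ifs with h1 h2 <;> simp_all [eq_comm]
  | ca j p h =>
      simp only [map_mul, zigFlipFree_a, zigFlipFree_c, map_zero]
      rw [← op_mul, aZ_mul_cZ, op_zero]
  | ac p h j =>
      simp only [map_mul, zigFlipFree_a, zigFlipFree_c, map_zero]
      rw [← op_mul, cZ_mul_aZ, op_zero]
  | cc i j =>
      simp only [map_mul, zigFlipFree_c, map_zero]
      rw [← op_mul, cZ_mul_cZ, op_zero]

/-- The anti-automorphism of the zigzag algebra, as a hom into the opposite algebra. -/
noncomputable def zigFlip : ZigAlg k V G →ₐ[k] (ZigAlg k V G)ᵐᵒᵖ :=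
  RingQuot.liftAlgHom k ⟨zigFlipFree k V G, zigFlipFree_rel k V G⟩

@[simp] lemma zigFlip_eZ (i : V) : zigFlip k V G (eZ k V G i) = op (eZ k V G i) := by
  rw [eZ, zigFlip, RingQuot.liftAlgHom_mkAlgHom_apply, zigFlipFree_e]; rfl

@[simp] lemma zigFlip_aZ (p : V × V) (h : G.Adj p.1 p.2) :
    zigFlip k V G (aZ k V G p h) = op (aZ k V G (p.2, p.1) h.symm) := by
  rw [aZ, zigFlip, RingQuot.liftAlgHom_mkAlgHom_apply, zigFlipFree_a]

@[simp] lemma zigFlip_cZ (i : V) : zigFlip k V G (cZ k V G i) = op (cZ k V G i) := by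
  rw [cZ, zigFlip, RingQuot.liftAlgHom_mkAlgHom_apply, zigFlipFree_c]; rfl

/-- The anti-automorphism of the zigzag algebra, as a linear endomorphism. -/
noncomputable def zigFlipL : ZigAlg k V G →ₗ[k] ZigAlg k V G :=
  (opLinearEquiv k).symm.toLinearMap ∘ₗ (zigFlip k V G).toLinearMap

@[simp] lemma zigFlipL_apply (x : ZigAlg k V G) :
    zigFlipL k V G x = unop (zigFlip k V G x) := rfl

lemma zigFlipL_one : zigFlipL k V G 1 = 1 := by simp

lemma zigFlipL_mul (x y : ZigAlg k V G) :
    zigFlipL k V G (x * y) = zigFlipL k V G y * zigFlipL k V G x := by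
  simp

@[simp] lemma zigFlipL_eZ (i : V) : zigFlipL k V G (eZ k V G i) = eZ k V G i := by simp

@[simp] lemma zigFlipL_aZ (p : V × V) (h : G.Adj p.1 p.2) :
    zigFlipL k V G (aZ k V G p h) = aZ k V G (p.2, p.1) h.symm := by simp

@[simp] lemma zigFlipL_cZ (i : V) : zigFlipL k V G (cZ k V G i) = cZ k V G i := by simp

lemma zigFlipL_zigFlipL (x : ZigAlg k V G) :
    zigFlipL k V G (zigFlipL k V G x) = x := by
  obtain ⟨y, rfl⟩ := RingQuot.mkAlgHom_surjective k (ZigRel k V G) x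
  induction y using FreeAlgebra.induction with
  | grade0 r =>
      simp [AlgHom.commutes, MulOpposite.algebraMap_apply]
  | grade1 g =>
      cases g with
      | e i => rw [mk_e]; simp
      | a p h => rw [mk_a]; simp
      | c i => rw [mk_c]; simp
  | mul a b ha hb =>
      rw [map_mul, zigFlipL_mul, zigFlipL_mul, ha, hb]
  | add a b ha hb =>
      rw [map_add, map_add, map_add, ha, hb]

end ZigFlip

end Aux14

namespace Aux14

section TmapSec

variable {k A : Type*} [CommRing k] [Ring A] [Algebra k A] {n : ℕ}

variable (τ : A →ₗ[k] A)

/-- The slotwise application of `τ` on the tensor power. -/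
noncomputable def Tmap : TPow k A n →ₗ[k] TPow k A n := PiTensorProduct.map fun _ => τ

@[simp] lemma Tmap_tprod (v : Fin n → A) :
    Tmap (n := n) τ (PiTensorProduct.tprod k v)
      = PiTensorProduct.tprod k (fun i => τ (v i)) :=
  PiTensorProduct.map_tprod _ _

variable (hone : τ 1 = 1) (hmul : ∀ x y : A, τ (x * y) = τ y * τ x)

include hone in
lemma Tmap_one : Tmap (n := n) τ 1 = 1 := by
  rw [PiTensorProduct.one_def, Tmap_tprod]
  have h1 : (fun i : Fin n => τ ((1 : Fin n → A) i)) = (1 : Fin n → A) := by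
    funext i
    simpa using hone
  rw [h1]

include hmul in
lemma Tmap_mul (x y : TPow k A n) :
    Tmap τ (x * y) = Tmap τ y * Tmap τ x := by
  induction x using PiTensorProduct.induction_on with
  | smul_tprod r v =>
      induction y using PiTensorProduct.induction_on with
      | smul_tprod r' w =>
          simp only [smul_mul_assoc, mul_smul_comm, map_smul,
            PiTensorProduct.tprod_mul_tprod, Tmap_tprod]
          rw [smul_comm]
          have h1 : (fun i => τ ((v * w) i))
              = ((fun i => τ (w i)) * fun i => τ (v i)) := by
            funext i
            simpa using hmul (v i) (w i)
          rw [h1]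
      | add a b ha hb =>
          simp only [mul_add, add_mul, map_add, ha, hb]
  | add a b ha hb =>
      simp only [mul_add, add_mul, map_add, ha, hb]

lemma Tmap_Tmap (hinv : ∀ x : A, τ (τ x) = x) (x : TPow k A n) :
    Tmap τ (Tmap τ x) = x := by
  have h : (Tmap (n := n) τ) ∘ₗ (Tmap (n := n) τ) = LinearMap.id := by
    rw [Tmap, ← PiTensorProduct.map_comp]
    have : (fun _ : Fin n => τ ∘ₗ τ) = fun _ : Fin n => (LinearMap.id : A →ₗ[k] A) := by
      funext i
      exact LinearMap.ext hinv
    rw [this, PiTensorProduct.map_id]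
  exact congrArg (fun f => f x) (congrArg DFunLike.coe h)

lemma Tmap_permAct (σ : Equiv.Perm (Fin n)) (x : TPow k A n) :
    Tmap τ (permAct k A n σ x) = permAct k A n σ (Tmap τ x) := by
  induction x using PiTensorProduct.induction_on with
  | smul_tprod r v =>
      simp only [map_smul, permAct, PiTensorProduct.reindex_tprod, Tmap_tprod]
  | add a b ha hb => simp only [map_add, ha, hb]

lemma permAct_swap_swap (σ : Equiv.Perm (Fin n)) (hσ : σ * σ = 1) (x : TPow k A n) :
    permAct k A n σ (permAct k A n σ x) = x := by
  induction x using PiTensorProduct.induction_on with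
  | smul_tprod r v =>
      have hs : σ.symm = σ := inv_eq_of_mul_eq_one_left hσ
      simp only [map_smul, permAct, PiTensorProduct.reindex_tprod]
      have h1 : (fun i => v ((Equiv.symm σ) ((Equiv.symm σ) i))) = v := by
        funext i
        have h2 : σ (σ i) = i := by
          have := congrArg (fun ρ : Equiv.Perm (Fin n) => ρ i) hσ
          simpa [Equiv.Perm.mul_apply] using this
        rw [hs, h2]
      rw [h1]
  | add a b ha hb => simp only [map_add, ha, hb]

lemma slotEmb_tmul (t u : Fin n) (h : t ≠ u) (x y : A) :
    slotEmb k A n t u h (x ⊗ₜ[k] y)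
      = PiTensorProduct.tprod k
          (Function.update (Function.update (fun _ : Fin n => (1 : A)) t x) u y) := rfl

include hone in
lemma Tmap_slotEmb (t u : Fin n) (h : t ≠ u) (D : A ⊗[k] A) :
    Tmap τ (slotEmb k A n t u h D)
      = slotEmb k A n t u h (TensorProduct.map τ τ D) := by
  have hcomp : (Tmap (n := n) τ) ∘ₗ slotEmb k A n t u h
      = slotEmb k A n t u h ∘ₗ TensorProduct.map τ τ := by
    apply TensorProduct.ext'
    intro x y
    simp only [LinearMap.comp_apply, TensorProduct.map_tmul, slotEmb_tmul, Tmap_tprod]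
    have h1 : (fun i => τ (Function.update (Function.update
        (fun _ : Fin n => (1 : A)) t x) u y i))
        = Function.update (Function.update (fun _ : Fin n => (1 : A)) t (τ x)) u (τ y) := by
      funext i
      rcases eq_or_ne i u with rfl | hu
      · simp
      · rcases eq_or_ne i t with rfl | ht
        · simp [Function.update_of_ne hu]
        · simp [Function.update_of_ne hu, Function.update_of_ne ht, hone]
    rw [h1]
  exact congrArg (fun f => f D) (congrArg DFunLike.coe hcomp)

include hone in
lemma Tmap_DeltaSlot (t u : Fin n) (h : t ≠ u) (D : A ⊗[k] A)
    (hD : TensorProduct.map τ τ D = D) :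
    Tmap τ (DeltaSlot k A n D t u h) = DeltaSlot k A n D t u h := by
  rw [DeltaSlot, Tmap_slotEmb τ hone, hD]

end TmapSec

end Aux14

namespace Aux14

section AffFlip

open MulOpposite

variable {k A : Type*} [CommRing k] [Ring A] [Algebra k A] {n : ℕ} {D : A ⊗[k] A}

lemma mk_z (i : Fin n) :
    RingQuot.mkAlgHom k (AffRel n D) (FreeAlgebra.ι k (.z i)) = zE n D i := rfl
lemma mk_t (a : TPow k A n) :
    RingQuot.mkAlgHom k (AffRel n D) (FreeAlgebra.ι k (.t a)) = tE n D a := rfl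
lemma mk_s (σ : Equiv.Perm (Fin n)) :
    RingQuot.mkAlgHom k (AffRel n D) (FreeAlgebra.ι k (.s σ)) = sE n D σ := rfl

lemma tE_mul (a b : TPow k A n) : tE n D (a * b) = tE n D a * tE n D b := by
  have := RingQuot.mkAlgHom_rel k (AffRel.t_mul (D := D) (n := n) a b)
  simpa [map_mul, mk_t] using this

lemma tE_one : tE n D 1 = 1 := by
  have := RingQuot.mkAlgHom_rel k (AffRel.t_one (D := D) (n := n))
  simpa [mk_t] using this

lemma sE_mul (σ τ : Equiv.Perm (Fin n)) : sE n D (σ * τ) = sE n D σ * sE n D τ := by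
  have := RingQuot.mkAlgHom_rel k (AffRel.s_mul (D := D) (n := n) σ τ)
  simpa [map_mul, mk_s] using this

lemma sE_one : sE n D 1 = 1 := by
  have := RingQuot.mkAlgHom_rel k (AffRel.s_one (D := D) (n := n))
  simpa [mk_s] using this

lemma zE_comm (i j : Fin n) : zE n D i * zE n D j = zE n D j * zE n D i := by
  have := RingQuot.mkAlgHom_rel k (AffRel.zz (D := D) (n := n) i j)
  simpa [map_mul, mk_z] using this

lemma tE_zE (a : TPow k A n) (j : Fin n) :
    tE n D a * zE n D j = zE n D j * tE n D a := by
  have := RingQuot.mkAlgHom_rel k (AffRel.az (D := D) (n := n) a j)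
  simpa [map_mul, mk_z, mk_t] using this

lemma sE_tE (i : Fin n) (h : (i : ℕ) + 1 < n) (a : TPow k A n) :
    sE n D (Equiv.swap i ⟨i + 1, h⟩) * tE n D a
      = tE n D (permAct k A n (Equiv.swap i ⟨i + 1, h⟩) a) *
          sE n D (Equiv.swap i ⟨i + 1, h⟩) := by
  have := RingQuot.mkAlgHom_rel k (AffRel.sa (D := D) (n := n) i h a)
  simpa [map_mul, mk_s, mk_t] using this

lemma sE_zE (i : Fin n) (h : (i : ℕ) + 1 < n) (j : Fin n) :
    sE n D (Equiv.swap i ⟨i + 1, h⟩) * zE n D j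
      = zE n D (Equiv.swap i ⟨i + 1, h⟩ j) * sE n D (Equiv.swap i ⟨i + 1, h⟩) +
          ((if j = i then (1 : k) else 0) - (if j = ⟨i + 1, h⟩ then (1 : k) else 0)) •
            tE n D (DeltaSlot k A n D i ⟨i + 1, h⟩
              (ne_of_lt (Fin.lt_def.mpr (Nat.lt_succ_self _)))) := by
  have := RingQuot.mkAlgHom_rel k (AffRel.sz (D := D) (n := n) i h j)
  simpa [map_mul, map_add, map_smul, mk_s, mk_z, mk_t] using this

variable (τ : A →ₗ[k] A)

/-- The candidate anti-automorphism on the free algebra over the affinization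
generators. -/
noncomputable def affFlipFree : FreeAlgebra k (AffGen k A n) →ₐ[k] (AffAlg n D)ᵐᵒᵖ :=
  FreeAlgebra.lift k fun g => match g with
    | .z i => op (zE n D i)
    | .t a => op (tE n D (Tmap τ a))
    | .s σ => op (sE n D σ⁻¹)

@[simp] lemma affFlipFree_z (i : Fin n) :
    affFlipFree (D := D) τ (FreeAlgebra.ι k (.z i)) = op (zE n D i) := by
  simp [affFlipFree]

@[simp] lemma affFlipFree_t (a : TPow k A n) :
    affFlipFree (D := D) τ (FreeAlgebra.ι k (.t a)) = op (tE n D (Tmap τ a)) := by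
  simp [affFlipFree]

@[simp] lemma affFlipFree_s (σ : Equiv.Perm (Fin n)) :
    affFlipFree (D := D) τ (FreeAlgebra.ι k (.s σ)) = op (sE n D σ⁻¹) := by
  simp [affFlipFree]

variable (hone : τ 1 = 1) (hmul : ∀ x y : A, τ (x * y) = τ y * τ x)
  (hD : TensorProduct.map τ τ D = D)

include hone hmul hD in
lemma affFlipFree_rel : ∀ ⦃x y : FreeAlgebra k (AffGen k A n)⦄,
    AffRel n D x y → affFlipFree (D := D) τ x = affFlipFree (D := D) τ y := by
  intro x y r
  induction r with
  | t_add a b => simp [map_add]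
  | t_smul c a => simp [map_smul]
  | t_mul a b =>
      simp only [map_mul, affFlipFree_t, Tmap_mul τ hmul, tE_mul, op_mul]
  | t_one =>
      simp only [affFlipFree_t, Tmap_one τ hone, tE_one, op_one, map_one]
  | s_mul σ ρ =>
      simp only [map_mul, affFlipFree_s, mul_inv_rev, sE_mul, op_mul]
  | s_one =>
      simp only [affFlipFree_s, inv_one, sE_one, op_one, map_one]
  | zz i j =>
      simp only [map_mul, affFlipFree_z, ← op_mul, zE_comm]
  | az a j =>
      simp only [map_mul, affFlipFree_z, affFlipFree_t, ← op_mul, tE_zE]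
  | sa i h a =>
      simp only [map_mul, affFlipFree_s, affFlipFree_t, ← op_mul, Equiv.swap_inv]
      rw [sE_tE, Tmap_permAct, permAct_swap_swap _ (Equiv.swap_mul_self _ _)]
  | sz i h j =>
      have hswap : Equiv.swap i (⟨i + 1, h⟩ : Fin n) (Equiv.swap i ⟨i + 1, h⟩ j) = j :=
        Equiv.swap_apply_self _ _ _
      have e1 : (Equiv.swap i (⟨i + 1, h⟩ : Fin n) j = i) = (j = (⟨i + 1, h⟩ : Fin n)) := by
        apply propext
        constructor
        · intro hh
          have h2 := congrArg (Equiv.swap i (⟨i + 1, h⟩ : Fin n)) hh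
          rw [hswap] at h2
          rw [h2, Equiv.swap_apply_left]
        · intro hh
          rw [hh, Equiv.swap_apply_right]
      have e2 : (Equiv.swap i (⟨i + 1, h⟩ : Fin n) j = (⟨i + 1, h⟩ : Fin n)) = (j = i) := by
        apply propext
        constructor
        · intro hh
          have h2 := congrArg (Equiv.swap i (⟨i + 1, h⟩ : Fin n)) hh
          rw [hswap] at h2
          rw [h2, Equiv.swap_apply_right]
        · intro hh
          rw [hh, Equiv.swap_apply_left]
      have hz := sE_zE (D := D) i h (Equiv.swap i ⟨i + 1, h⟩ j)
      rw [hswap] at hz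
      simp only [e1, e2] at hz
      have hc : (((if j = (⟨i + 1, h⟩ : Fin n) then (1 : k) else 0) -
            (if j = i then (1 : k) else 0)) +
          ((if j = i then (1 : k) else 0) -
            (if j = (⟨i + 1, h⟩ : Fin n) then (1 : k) else 0))) = 0 := by ring
      have hTD := Tmap_DeltaSlot (n := n) τ hone i ⟨i + 1, h⟩
        (ne_of_lt (Fin.lt_def.mpr (Nat.lt_succ_self _))) D hD
      simp only [map_add, map_mul, map_smul, affFlipFree_s, affFlipFree_z, affFlipFree_t,
        Equiv.swap_inv, ← op_mul]
      rw [hTD, hz, op_add, op_smul, add_assoc, ← add_smul, hc, zero_smul, add_zero]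

/-- The anti-automorphism of the affinization. -/
noncomputable def affFlip : AffAlg n D →ₐ[k] (AffAlg n D)ᵐᵒᵖ :=
  RingQuot.liftAlgHom k ⟨affFlipFree (D := D) τ, affFlipFree_rel τ hone hmul hD⟩

@[simp] lemma affFlip_zE (i : Fin n) :
    affFlip τ hone hmul hD (zE n D i) = op (zE n D i) := by
  rw [zE, affFlip, RingQuot.liftAlgHom_mkAlgHom_apply, affFlipFree_z]
  rfl

@[simp] lemma affFlip_tE (a : TPow k A n) :
    affFlip τ hone hmul hD (tE n D a) = op (tE n D (Tmap τ a)) := by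
  rw [← mk_t, affFlip, RingQuot.liftAlgHom_mkAlgHom_apply, affFlipFree_t]

@[simp] lemma affFlip_sE (σ : Equiv.Perm (Fin n)) :
    affFlip τ hone hmul hD (sE n D σ) = op (sE n D σ⁻¹) := by
  rw [sE, affFlip, RingQuot.liftAlgHom_mkAlgHom_apply, affFlipFree_s]

end AffFlip

section UnopComp

open MulOpposite

variable {k B : Type*} [CommRing k] [Ring B] [Algebra k B]

/-- Turn an algebra hom into the opposite algebra into a hom from the opposite
algebra. -/
noncomputable def unopComp (Φ : B →ₐ[k] Bᵐᵒᵖ) : Bᵐᵒᵖ →ₐ[k] B where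
  toFun x := unop (Φ (unop x))
  map_one' := by simp
  map_mul' x y := by simp
  map_zero' := by simp
  map_add' x y := by simp
  commutes' r := by simp [MulOpposite.algebraMap_apply]

@[simp] lemma unopComp_apply (Φ : B →ₐ[k] Bᵐᵒᵖ) (x : Bᵐᵒᵖ) :
    unopComp Φ x = unop (Φ (unop x)) := rfl

end UnopComp

end Aux14

namespace Aux14

section EquivSec

open MulOpposite

variable {k A : Type*} [CommRing k] [Ring A] [Algebra k A] {n : ℕ} {D : A ⊗[k] A}
variable (τ : A →ₗ[k] A) (hone : τ 1 = 1) (hmul : ∀ x y : A, τ (x * y) = τ y * τ x)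
  (hD : TensorProduct.map τ τ D = D) (hinv : ∀ x : A, τ (τ x) = x)

include hinv in
lemma affFlip_comp :
    (unopComp (affFlip (D := D) τ hone hmul hD)).comp (affFlip (D := D) τ hone hmul hD)
      = AlgHom.id k (AffAlg n D) := by
  apply RingQuot.ringQuot_ext'
  apply FreeAlgebra.hom_ext
  funext g
  cases g with
  | z i =>
      simp [Function.comp, mk_z, affFlip_zE]
  | t a =>
      simp [Function.comp, mk_t, affFlip_tE, Tmap_Tmap τ hinv]
  | s σ =>
      simp [Function.comp, mk_s, affFlip_sE, inv_inv]

/-- The anti-involution of the affinization, as an algebra isomorphism onto the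
opposite algebra. -/
noncomputable def affFlipEquiv : AffAlg n D ≃ₐ[k] (AffAlg n D)ᵐᵒᵖ :=
  AlgEquiv.ofAlgHom (affFlip (D := D) τ hone hmul hD)
    (unopComp (affFlip (D := D) τ hone hmul hD))
    (by
      apply AlgHom.ext
      intro x
      have h2 := AlgHom.congr_fun (affFlip_comp τ hone hmul hD hinv)
        (unop ((affFlip (D := D) τ hone hmul hD) (unop x)))
      apply MulOpposite.unop_injective
      simpa using AlgHom.congr_fun (affFlip_comp τ hone hmul hD hinv) (unop x))
    (affFlip_comp τ hone hmul hD hinv)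

@[simp] lemma affFlipEquiv_apply (x : AffAlg n D) :
    affFlipEquiv τ hone hmul hD hinv x = affFlip (D := D) τ hone hmul hD x := rfl

end EquivSec

end Aux14

namespace Aux14

section Main

open MulOpposite

variable (k : Type*) [CommRing k]
  (V : Type*) [Fintype V] [DecidableEq V]
  (G : SimpleGraph V) [DecidableRel G.Adj]

/-- The edge-flipping bijection on oriented edges. -/
def flipEdge : {p : V × V // G.Adj p.1 p.2} ≃ {p : V × V // G.Adj p.1 p.2} where
  toFun p := ⟨(p.1.2, p.1.1), p.2.symm⟩
  invFun p := ⟨(p.1.2, p.1.1), p.2.symm⟩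
  left_inv p := Subtype.ext rfl
  right_inv p := Subtype.ext rfl

lemma zigDelta_flip :
    TensorProduct.map (zigFlipL k V G) (zigFlipL k V G) (zigDelta k V G)
      = zigDelta k V G := by
  rw [zigDelta, map_add, map_sum, map_sum]
  congr 1
  · refine Finset.sum_congr rfl fun i _ => ?_
    rw [map_add, TensorProduct.map_tmul, TensorProduct.map_tmul,
      zigFlipL_eZ, zigFlipL_cZ]
  · rw [← Equiv.sum_comp (flipEdge V G)
      (fun p : {p : V × V // G.Adj p.1 p.2} =>
        aZ k V G (p.1.2, p.1.1) p.2.symm ⊗ₜ[k] aZ k V G p.1 p.2)]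
    refine Finset.sum_congr rfl fun p _ => ?_
    rw [TensorProduct.map_tmul, zigFlipL_aZ, zigFlipL_aZ]
    rfl

variable (n : ℕ)

lemma Tmap_eTup (v : Fin n → V) :
    Tmap (zigFlipL k V G) (eTup k V G n v) = eTup k V G n v := by
  rw [eTup, Tmap_tprod]
  have h1 : (fun i => zigFlipL k V G (eZ k V G (v i))) = fun r => eZ k V G (v r) := by
    funext r
    rw [zigFlipL_eZ]
  rw [h1]

lemma Tmap_aSlot (t : Fin n) (p : V × V) (h : G.Adj p.1 p.2) :
    Tmap (zigFlipL k V G) (aSlot k V G n t p h)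
      = aSlot k V G n t (p.2, p.1) h.symm := by
  rw [aSlot, Tmap_tprod, aSlot]
  have h1 : (fun i => zigFlipL k V G
      (Function.update (fun _ : Fin n => (1 : ZigAlg k V G)) t (aZ k V G p h) i))
      = Function.update (fun _ : Fin n => (1 : ZigAlg k V G)) t
          (aZ k V G (p.2, p.1) h.symm) := by
    funext i
    rcases eq_or_ne i t with rfl | hi
    · simp only [Function.update_self, zigFlipL_aZ]
    · simp only [Function.update_of_ne hi]
      exact zigFlipL_one k V G
  rw [h1]

end Main

end Aux14

open MulOpposite in
theorem stmt14
    (k : Type*) [CommRing k] [IsNoetherianRing k]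
    (V : Type*) [Fintype V] [DecidableEq V]
    (G : SimpleGraph V) [DecidableRel G.Adj]
    (hconn : G.Connected) (n : ℕ) :
    letI D := zigDelta k V G
    ∃ F : AffZig k V G n ≃ₐ[k] (AffZig k V G n)ᵐᵒᵖ,
      -- `ν̂(z_t) = z_t`
      (∀ t : Fin n, F (zE n D t) = op (zE n D t)) ∧
      -- `ν̂(e_𝐢) = e_𝐢` for all tuples `𝐢 ∈ Γ₀^n`
      (∀ v : Fin n → V, F (tE n D (eTup k V G n v)) = op (tE n D (eTup k V G n v))) ∧
      -- `ν̂(a^{i,j}_t) = a^{j,i}_t`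
      (∀ (t : Fin n) (p : V × V) (h : G.Adj p.1 p.2),
        F (tE n D (aSlot k V G n t p h))
          = op (tE n D (aSlot k V G n t (p.2, p.1) h.symm))) ∧
      -- `ν̂(s_u) = s_u`
      (∀ (u : Fin n) (h : (u : ℕ) + 1 < n),
        F (sE n D (Equiv.swap u ⟨(u : ℕ) + 1, h⟩))
          = op (sE n D (Equiv.swap u ⟨(u : ℕ) + 1, h⟩))) := by
  refine ⟨Aux14.affFlipEquiv (Aux14.zigFlipL k V G) (Aux14.zigFlipL_one k V G)
      (Aux14.zigFlipL_mul k V G) (Aux14.zigDelta_flip k V G)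
      (Aux14.zigFlipL_zigFlipL k V G), ?_, ?_, ?_, ?_⟩
  · intro t
    rw [Aux14.affFlipEquiv_apply, Aux14.affFlip_zE]
  · intro v
    rw [Aux14.affFlipEquiv_apply, Aux14.affFlip_tE, Aux14.Tmap_eTup]
  · intro t p h
    rw [Aux14.affFlipEquiv_apply, Aux14.affFlip_tE, Aux14.Tmap_aSlot]
  · intro u h
    rw [Aux14.affFlipEquiv_apply, Aux14.affFlip_sE, Equiv.swap_inv]
end
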